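/- Let α > 1 and αβ² < γ². Then: (i) for every r < γ/√α the iterates φⁿ(r) converge to 0; (ii) γ/√α is a fixed point of φ; (iii) for every r > γ/√α the iterates φⁿ(r) tend to +∞. -/

import Mathlib

open Filter

/-- The real map describing how `f(x) = a x ((x+b)/(x+c))²` transforms the p-adic
absolute value `|x|_p` when `α = |a|_p`, `β = |b|_p`, `γ = |c|_p` and `β < γ`. -/
noncomputable def phiMap (α β γ bs cs : ℝ) : ℝ → ℝ := fun r =>
  if r < β then α * β ^ 2 / γ ^ 2 * r
  else if r = β then bs
  else if r < γ then α / γ ^ 2 * r ^ 3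
  else if r = γ then cs
  else α * r

theorem phi_dynamics_of_alpha_gt_one_lt
    (α β γ bs cs : ℝ) (hα : 0 < α) (hβ : 0 < β) (hγ : 0 < γ)
    (hbs : 0 < bs) (hcs : 0 < cs) (hβγ : β < γ)
    (hbsle : bs ≤ α * β ^ 3 / γ ^ 2) (hcsge : α * γ ≤ cs)
    (hα1 : 1 < α) (hlt : α * β ^ 2 < γ ^ 2) :
    (∀ r : ℝ, 0 ≤ r → r < γ / Real.sqrt α →
      Tendsto (fun n => (phiMap α β γ bs cs)^[n] r) atTop (nhds 0)) ∧
    phiMap α β γ bs cs (γ / Real.sqrt α) = γ / Real.sqrt α ∧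
    (∀ r : ℝ, γ / Real.sqrt α < r →
      Tendsto (fun n => (phiMap α β γ bs cs)^[n] r) atTop atTop) := by
  have hsa : (0:ℝ) < Real.sqrt α := Real.sqrt_pos.mpr hα
  have hsq : Real.sqrt α ^ 2 = α := Real.sq_sqrt hα.le
  have hsa1 : 1 < Real.sqrt α := by nlinarith
  set s := γ / Real.sqrt α with hs
  have hspos : 0 < s := div_pos hγ hsa
  have hsγ : s < γ := div_lt_self hγ hsa1
  have hs2 : α * s ^ 2 = γ ^ 2 := by
    rw [hs, div_pow, hsq]
    field_simp
  have hβs : β < s := lt_of_pow_lt_pow_left₀ 2 hspos.le (by nlinarith)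
  refine ⟨?_, ?_, ?_⟩
  · -- (i) convergence to 0 below s
    intro r hr0 hrs
    set k : ℝ := max (α * β ^ 2 / γ ^ 2) (α * r ^ 2 / γ ^ 2) with hk
    have hk0 : 0 ≤ k := le_trans (by positivity) (le_max_left _ _)
    have hr2 : r ^ 2 < s ^ 2 := by
      rcases eq_or_lt_of_le hr0 with h | h
      · simp [← h]; positivity
      · exact pow_lt_pow_left₀ hrs hr0 (by norm_num)
    have hk1 : k < 1 := by
      apply max_lt
      · rw [div_lt_one (by positivity)]; exact hlt
      · rw [div_lt_one (by positivity)]; nlinarith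
    have step : ∀ x, 0 ≤ x → x ≤ r →
        0 ≤ phiMap α β γ bs cs x ∧ phiMap α β γ bs cs x ≤ k * x := by
      intro x hx0 hxr
      have hxγ : x < γ := by linarith
      simp only [phiMap]
      split_ifs with h1 h2
      · constructor
        · positivity
        · exact mul_le_mul_of_nonneg_right (le_max_left _ _) hx0
      · rw [h2]
        refine ⟨hbs.le, ?_⟩
        calc bs ≤ α * β ^ 3 / γ ^ 2 := hbsle
          _ = α * β ^ 2 / γ ^ 2 * β := by ring
          _ ≤ k * β := mul_le_mul_of_nonneg_right (le_max_left _ _) hβ.le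
      · constructor
        · positivity
        · have hx2 : x ^ 2 ≤ r ^ 2 := by gcongr
          have h5 : α * x ^ 2 / γ ^ 2 ≤ k := le_trans (by gcongr) (le_max_right _ _)
          calc α / γ ^ 2 * x ^ 3 = α * x ^ 2 / γ ^ 2 * x := by ring
            _ ≤ k * x := mul_le_mul_of_nonneg_right h5 hx0
    have bound : ∀ n, 0 ≤ (phiMap α β γ bs cs)^[n] r ∧
        (phiMap α β γ bs cs)^[n] r ≤ k ^ n * r := by
      intro n
      induction n with
      | zero => simpa using hr0
      | succ n ih =>
        have hle : (phiMap α β γ bs cs)^[n] r ≤ r := by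
          calc (phiMap α β γ bs cs)^[n] r ≤ k ^ n * r := ih.2
            _ ≤ 1 * r := by
                apply mul_le_mul_of_nonneg_right _ hr0
                exact pow_le_one₀ hk0 hk1.le
            _ = r := one_mul r
        have hstep := step _ ih.1 hle
        rw [Function.iterate_succ_apply']
        refine ⟨hstep.1, ?_⟩
        calc phiMap α β γ bs cs ((phiMap α β γ bs cs)^[n] r)
            ≤ k * (phiMap α β γ bs cs)^[n] r := hstep.2
          _ ≤ k * (k ^ n * r) := mul_le_mul_of_nonneg_left ih.2 hk0
          _ = k ^ (n + 1) * r := by ring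
    apply squeeze_zero (fun n => (bound n).1) (fun n => (bound n).2)
    simpa using (tendsto_pow_atTop_nhds_zero_of_lt_one hk0 hk1).mul_const r
  · -- (ii) fixed point
    have h1 : ¬ s < β := not_lt.mpr hβs.le
    have h2 : s ≠ β := hβs.ne'
    simp only [phiMap, if_neg h1, if_neg h2, if_pos hsγ]
    have hγ0 : γ ≠ 0 := hγ.ne'
    field_simp
    linear_combination hs2
  · -- (iii) divergence above s
    intro r hr
    have hrpos : 0 < r := hspos.trans hr
    set L : ℝ := min (α * r ^ 2 / γ ^ 2) α with hL
    have hL1 : 1 < L := by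
      apply lt_min _ hα1
      rw [lt_div_iff₀ (by positivity), one_mul]
      nlinarith [pow_lt_pow_left₀ hr hspos.le (two_ne_zero)]
    have step : ∀ x, r ≤ x → L * x ≤ phiMap α β γ bs cs x := by
      intro x hx
      have hx0 : (0:ℝ) < x := hrpos.trans_le hx
      simp only [phiMap]
      split_ifs with h1 h2 h3 h4
      · exact absurd h1 (by linarith)
      · exact absurd h2 (by intro h; linarith [h ▸ hx])
      · have hx2 : r ^ 2 ≤ x ^ 2 := by gcongr
        have h5 : L ≤ α * x ^ 2 / γ ^ 2 := le_trans (min_le_left _ _) (by gcongr)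
        calc L * x ≤ α * x ^ 2 / γ ^ 2 * x := mul_le_mul_of_nonneg_right h5 hx0.le
          _ = α / γ ^ 2 * x ^ 3 := by ring
      · subst h4
        calc L * x ≤ α * x := mul_le_mul_of_nonneg_right (min_le_right _ _) hx0.le
          _ ≤ cs := hcsge
      · exact mul_le_mul_of_nonneg_right (min_le_right _ _) hx0.le
    have bound : ∀ n, r ≤ (phiMap α β γ bs cs)^[n] r ∧
        L ^ n * r ≤ (phiMap α β γ bs cs)^[n] r := by
      intro n
      induction n with
      | zero => simp
      | succ n ih =>
        have hstep := step _ ih.1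
        rw [Function.iterate_succ_apply']
        constructor
        · calc r ≤ (phiMap α β γ bs cs)^[n] r := ih.1
            _ = 1 * (phiMap α β γ bs cs)^[n] r := (one_mul _).symm
            _ ≤ L * (phiMap α β γ bs cs)^[n] r := by
                apply mul_le_mul_of_nonneg_right hL1.le
                linarith [ih.1]
            _ ≤ _ := hstep
        · calc L ^ (n + 1) * r = L * (L ^ n * r) := by ring
            _ ≤ L * (phiMap α β γ bs cs)^[n] r :=
                mul_le_mul_of_nonneg_left ih.2 (by linarith)
            _ ≤ _ := hstep
    apply tendsto_atTop_mono (fun n => (bound n).2)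
    exact (tendsto_pow_atTop_atTop_of_one_lt hL1).atTop_mul_const hrpos
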